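/- Let σ₁ satisfy σ < σ₁ < (1/d)·min_{i≥1} δ_i, and consider a point [Z_0,…,Z_n] ∈ ℂℙ^n with |Z_k| > ½|Z_j| for all j (i.e. in the chart U_k) satisfying F_t = 0, where F_t = t^δ Σ_{i=0}^p a_i t^{δ_i} Z^{α^i} with δ_0 = 0, a_0 = 1. If |Z_l / Z_k| ≥ |t|^{σ₁} for every l ≠ k with α^0_l > 0, then |Z^{α^0}| ≥ |t|^{σ₁ d} |Z_k|^d, while the equation F_t = 0 forces |Z^{α^0}| ≤ 2^d Σ_{i=1}^p |a_i| · |t|^{min_{i≥1} δ_i} |Z_k|^d; hence for |t| small enough there exists l ≠ k with |Z_l/Z_k| < |t|^{σ₁}. -/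

import Mathlib

open Finset

/-- on the chart `U_k` and on the hypersurface `F_t = 0`, the leading
monomial satisfies `|Z^{α^0}| ≤ 2^d Σ_{i≥1}|a_i| |t|^{min_{i≥1} δ_i} |Z_k|^d`; if
moreover `|Z_l/Z_k| ≥ |t|^{σ₁}` for every `l ≠ k` with `α^0_l > 0` then
`|Z^{α^0}| ≥ |t|^{σ₁ d} |Z_k|^d`; hence for `t` small there is `l ≠ k` with
`|Z_l/Z_k| < |t|^{σ₁}`. -/
theorem chart_coordinate_smallness
    (n p d : ℕ) (a : Fin (p + 1) → ℂ) (δ : Fin (p + 1) → ℝ)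
    (α : Fin (p + 1) → Fin (n + 1) → ℕ)
    (ha : ∀ i, a i ≠ 0) (ha0 : a 0 = 1) (hδ0 : δ 0 = 0)
    (hdeg : ∀ i, ∑ j, α i j = d)
    (δmin : ℝ) (hδminpos : 0 < δmin) (hδmin : ∀ i, i ≠ 0 → δmin ≤ δ i)
    (σ σ₁ : ℝ) (hσ : 0 ≤ σ) (hσσ₁ : σ < σ₁) (hσ₁ : σ₁ < δmin / d)
    (k : Fin (n + 1)) :
    ∃ t₀ : ℝ, 0 < t₀ ∧ t₀ ≤ 1 ∧ ∀ t : ℝ, 0 < t → t < t₀ →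
      ∀ Z : Fin (n + 1) → ℂ,
        (∀ j, (1 / 2) * ‖Z j‖ < ‖Z k‖) →
        (∑ i, a i * ((t ^ δ i : ℝ) : ℂ) * ∏ j, Z j ^ α i j) = 0 →
        (‖∏ j, Z j ^ α 0 j‖
            ≤ 2 ^ d * (∑ i ∈ univ.erase 0, ‖a i‖) * t ^ δmin
                * ‖Z k‖ ^ d) ∧
        ((∀ l, l ≠ k → 0 < α 0 l →
            t ^ σ₁ * ‖Z k‖ ≤ ‖Z l‖) →
          t ^ (σ₁ * d) * ‖Z k‖ ^ d
            ≤ ‖∏ j, Z j ^ α 0 j‖) ∧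
        (∃ l, l ≠ k ∧ ‖Z l‖ < t ^ σ₁ * ‖Z k‖) := by
  classical
  have hσ₁pos : 0 < σ₁ := lt_of_le_of_lt hσ hσσ₁
  have hd : 0 < d := by
    rcases Nat.eq_zero_or_pos d with h | h
    · exfalso; subst h; simp at hσ₁; linarith
    · exact h
  have hdR : (0:ℝ) < d := by exact_mod_cast hd
  have hσ₁d : σ₁ * d < δmin := by
    have := (lt_div_iff₀ hdR).mp hσ₁; linarith
  set S : ℝ := ∑ i ∈ univ.erase (0 : Fin (p+1)), ‖a i‖ with hSdef
  have hS0 : 0 ≤ S := sum_nonneg fun i _ => norm_nonneg _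
  have hC0 : (0:ℝ) ≤ 2 ^ d * S := by positivity
  set e : ℝ := δmin - σ₁ * d with hedef
  have he : 0 < e := by simp only [hedef]; linarith
  refine ⟨min 1 ((1 + 2 ^ d * S)⁻¹ ^ (1/e) : ℝ), ?_, min_le_left _ _, ?_⟩
  · exact lt_min one_pos (Real.rpow_pos_of_pos (by positivity) _)
  intro t ht htt₀ Z hU heq
  have ht1 : t < 1 := lt_of_lt_of_le htt₀ (min_le_left _ _)
  have hZk : 0 < ‖Z k‖ := by have := hU k; linarith
  have hCte : 2 ^ d * S * t ^ e < 1 := by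
    have ht' : t < (1 + 2 ^ d * S)⁻¹ ^ (1/e) := lt_of_lt_of_le htt₀ (min_le_right _ _)
    have h1 : t ^ e < ((1 + 2 ^ d * S)⁻¹ ^ (1/e)) ^ e := Real.rpow_lt_rpow ht.le ht' he
    rw [← Real.rpow_mul (by positivity), one_div, inv_mul_cancel₀ he.ne', Real.rpow_one] at h1
    have h2 : 2 ^ d * S * t ^ e ≤ 2 ^ d * S * (1 + 2 ^ d * S)⁻¹ :=
      mul_le_mul_of_nonneg_left h1.le hC0
    have h3 : 2 ^ d * S * (1 + 2 ^ d * S)⁻¹ < 1 := by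
      rw [← div_eq_mul_inv, div_lt_one (by linarith)]; linarith
    linarith
  have hterm0 : a 0 * ((t ^ δ 0 : ℝ) : ℂ) * ∏ j, Z j ^ α 0 j = ∏ j, Z j ^ α 0 j := by
    rw [ha0, hδ0, Real.rpow_zero]; simp
  rw [← Finset.add_sum_erase univ _ (mem_univ 0), hterm0] at heq
  have hmain : (∏ j, Z j ^ α 0 j)
      = -∑ i ∈ univ.erase (0 : Fin (p+1)), a i * ((t ^ δ i : ℝ) : ℂ) * ∏ j, Z j ^ α i j := by
    linear_combination heq
  have hmon : ∀ i : Fin (p+1),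
      ‖∏ j, Z j ^ α i j‖ ≤ 2 ^ d * ‖Z k‖ ^ d := by
    intro i
    rw [norm_prod]
    calc ∏ j, ‖Z j ^ α i j‖
        = ∏ j, ‖Z j‖ ^ α i j := by simp [norm_pow]
      _ ≤ ∏ j, (2 * ‖Z k‖) ^ α i j := by
          apply prod_le_prod
          · intros; positivity
          · intro j _
            exact pow_le_pow_left₀ (norm_nonneg _) (by have := hU j; linarith) _
      _ = (2 * ‖Z k‖) ^ (∑ j, α i j) := by rw [prod_pow_eq_pow_sum]
      _ = 2 ^ d * ‖Z k‖ ^ d := by rw [hdeg i, mul_pow]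
  have part1 : ‖∏ j, Z j ^ α 0 j‖
      ≤ 2 ^ d * S * t ^ δmin * ‖Z k‖ ^ d := by
    rw [hmain, norm_neg]
    calc ‖∑ i ∈ univ.erase (0 : Fin (p+1)),
            a i * ((t ^ δ i : ℝ) : ℂ) * ∏ j, Z j ^ α i j‖
        ≤ ∑ i ∈ univ.erase (0 : Fin (p+1)),
            ‖a i * ((t ^ δ i : ℝ) : ℂ) * ∏ j, Z j ^ α i j‖ :=
          norm_sum_le _ _
      _ ≤ ∑ i ∈ univ.erase (0 : Fin (p+1)),
            ‖a i‖ * (t ^ δmin * (2 ^ d * ‖Z k‖ ^ d)) := by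
          apply sum_le_sum
          intro i hi
          rw [norm_mul, norm_mul, Complex.norm_real,
            Real.norm_of_nonneg (Real.rpow_nonneg ht.le _), mul_assoc]
          apply mul_le_mul_of_nonneg_left _ (norm_nonneg _)
          have h1 : t ^ δ i ≤ t ^ δmin :=
            Real.rpow_le_rpow_of_exponent_ge ht ht1.le (hδmin i (mem_erase.mp hi).1)
          exact mul_le_mul h1 (hmon i) (norm_nonneg _) (Real.rpow_nonneg ht.le _)
      _ = 2 ^ d * S * t ^ δmin * ‖Z k‖ ^ d := by
          rw [← sum_mul]; ring
  have part2 : (∀ l, l ≠ k → 0 < α 0 l →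
        t ^ σ₁ * ‖Z k‖ ≤ ‖Z l‖) →
      t ^ (σ₁ * d) * ‖Z k‖ ^ d ≤ ‖∏ j, Z j ^ α 0 j‖ := by
    intro hl
    have hts : t ^ σ₁ ≤ 1 := Real.rpow_le_one ht.le ht1.le hσ₁pos.le
    have htspos : (0:ℝ) < t ^ σ₁ := Real.rpow_pos_of_pos ht _
    have hkey : ∀ j, (t ^ σ₁ * ‖Z k‖) ^ α 0 j ≤ ‖Z j‖ ^ α 0 j := by
      intro j
      rcases Nat.eq_zero_or_pos (α 0 j) with h0 | h0
      · simp [h0]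
      · apply pow_le_pow_left₀ (by positivity)
        by_cases hj : j = k
        · subst hj; nlinarith
        · exact hl j hj h0
    calc t ^ (σ₁ * d) * ‖Z k‖ ^ d
        = ∏ j, (t ^ σ₁ * ‖Z k‖) ^ α 0 j := by
          rw [prod_pow_eq_pow_sum, hdeg 0, mul_pow, Real.rpow_mul ht.le,
            Real.rpow_natCast]
      _ ≤ ∏ j, ‖Z j‖ ^ α 0 j :=
          prod_le_prod (fun j _ => by positivity) (fun j _ => hkey j)
      _ = ‖∏ j, Z j ^ α 0 j‖ := by rw [norm_prod]; simp [norm_pow]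
  refine ⟨part1, part2, ?_⟩
  by_contra hcon
  push_neg at hcon
  have h2 := part2 (fun l hlk _ => hcon l hlk)
  have hZkd : (0:ℝ) < ‖Z k‖ ^ d := by positivity
  have hcc : t ^ (σ₁ * d) ≤ 2 ^ d * S * t ^ δmin :=
    le_of_mul_le_mul_right (le_trans h2 part1) hZkd
  have hsplit : t ^ δmin = t ^ (σ₁ * d) * t ^ e := by
    rw [← Real.rpow_add ht]
    congr 1
    simp only [hedef]; ring
  have hpos : 0 < t ^ (σ₁ * (d:ℝ)) := Real.rpow_pos_of_pos ht _
  have hfin : 2 ^ d * S * t ^ δmin < t ^ (σ₁ * (d:ℝ)) := by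
    rw [hsplit]
    calc 2 ^ d * S * (t ^ (σ₁ * (d:ℝ)) * t ^ e)
        = (2 ^ d * S * t ^ e) * t ^ (σ₁ * (d:ℝ)) := by ring
      _ < 1 * t ^ (σ₁ * (d:ℝ)) := mul_lt_mul_of_pos_right hCte hpos
      _ = t ^ (σ₁ * (d:ℝ)) := one_mul _
  linarith
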